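/- Let P = (p_1, ..., p_k) and Q = (q_1, ..., q_k) be probability vectors with p_i > 0 for all i and p_1 ≥ p_2 ≥ ... ≥ p_k. If there exists j ≠ 1 with q_j ≥ q_1, then the KL divergence ∑_i q_i log(q_i/p_i) is at least -log(2√(p_1 p_2) + 1 - p_1 - p_2). -/

import Mathlib

lemma kl_core (n : ℕ) (q r : Fin n → ℝ) (hq : ∀ i, 0 ≤ q i) (hqs : ∑ i, q i = 1)
    (hr : ∀ i, 0 < r i) :
    -Real.log (∑ i, r i) ≤ ∑ i, q i * Real.log (q i / r i) := by
  have hne : (Finset.univ : Finset (Fin n)).Nonempty := by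
    by_contra h
    rw [Finset.not_nonempty_iff_eq_empty] at h
    simp [h] at hqs
  set S := ∑ i, r i with hS
  have hSpos : 0 < S := Finset.sum_pos (fun i _ => hr i) hne
  have key : ∀ i, q i - r i / S ≤ q i * Real.log (q i / r i) + q i * Real.log S := by
    intro i
    rcases eq_or_lt_of_le (hq i) with h | h
    · have hnn : 0 ≤ r i / S := div_nonneg (hr i).le hSpos.le
      rw [← h]
      simp
      linarith
    · have hx : 0 < q i * S / r i := div_pos (mul_pos h hSpos) (hr i)
      have hlog := Real.log_le_sub_one_of_pos (inv_pos.mpr hx)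
      rw [Real.log_inv] at hlog
      have h1 : 1 - (q i * S / r i)⁻¹ ≤ Real.log (q i * S / r i) := by linarith
      have h2 : Real.log (q i * S / r i) = Real.log (q i / r i) + Real.log S := by
        rw [show q i * S / r i = (q i / r i) * S by ring,
          Real.log_mul (ne_of_gt (div_pos h (hr i))) (ne_of_gt hSpos)]
      have h3 : q i * (q i * S / r i)⁻¹ = r i / S := by
        rw [inv_div]
        field_simp
      nlinarith [mul_le_mul_of_nonneg_left h1 (le_of_lt h)]
  have hsum : ∑ i, (q i - r i / S) ≤ ∑ i, (q i * Real.log (q i / r i) + q i * Real.log S) :=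
    Finset.sum_le_sum (fun i _ => key i)
  have e1 : ∑ i, (q i - r i / S) = 0 := by
    rw [Finset.sum_sub_distrib, hqs, ← Finset.sum_div, ← hS, div_self (ne_of_gt hSpos)]
    ring
  have e2 : ∑ i, (q i * Real.log (q i / r i) + q i * Real.log S)
      = (∑ i, q i * Real.log (q i / r i)) + Real.log S := by
    rw [Finset.sum_add_distrib, ← Finset.sum_mul, hqs, one_mul]
  rw [e1, e2] at hsum
  linarith

/-- KL divergence lower bound when the argmax of `Q` differs from that of `P`. -/
theorem kl_lower_bound (k : ℕ) (P Q : Fin (k + 2) → ℝ)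
    (hPpos : ∀ i, 0 < P i) (hPsum : ∑ i, P i = 1)
    (hQnn : ∀ i, 0 ≤ Q i) (hQsum : ∑ i, Q i = 1)
    (hPmono : ∀ i j : Fin (k + 2), i ≤ j → P j ≤ P i)
    (hmax : ∃ j : Fin (k + 2), j ≠ 0 ∧ Q 0 ≤ Q j) :
    -Real.log (2 * Real.sqrt (P 0 * P 1) + 1 - P 0 - P 1) ≤
      ∑ i, Q i * Real.log (Q i / P i) := by
  obtain ⟨j, hj0, hjq⟩ := hmax
  have hj1 : (1 : Fin (k + 2)) ≤ j := by
    have : j.val ≠ 0 := fun h => hj0 (Fin.ext (by simpa using h))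
    simp [Fin.le_def]
    omega
  have h01 : (0 : Fin (k + 2)) ≤ 1 := by simp [Fin.le_def]
  have hPj1 : P j ≤ P 1 := hPmono 1 j hj1
  have hP10 : P 1 ≤ P 0 := hPmono 0 1 h01
  have hPj0 : P j ≤ P 0 := le_trans hPj1 hP10
  set c : Fin (k + 2) → ℝ := fun i =>
    if i = 0 then Real.sqrt (P j / P 0) else if i = j then Real.sqrt (P 0 / P j) else 1
    with hc
  have hcpos : ∀ i, 0 < c i := by
    intro i
    rw [hc]
    dsimp only
    split_ifs
    · exact Real.sqrt_pos.mpr (div_pos (hPpos j) (hPpos 0))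
    · exact Real.sqrt_pos.mpr (div_pos (hPpos 0) (hPpos j))
    · norm_num
  set r : Fin (k + 2) → ℝ := fun i => P i * c i with hrdef
  have hrpos : ∀ i, 0 < r i := fun i => mul_pos (hPpos i) (hcpos i)
  -- value of c at 0 and j
  have hc0 : c 0 = Real.sqrt (P j / P 0) := by
    rw [hc]; dsimp only; rw [if_pos rfl]
  have hcj : c j = Real.sqrt (P 0 / P j) := by
    rw [hc]; dsimp only; rw [if_neg hj0, if_pos rfl]
  have hcelse : ∀ i, i ≠ 0 → i ≠ j → c i = 1 := by
    intro i h1 h2; rw [hc]; simp [h1, h2]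
  -- P 0 * c 0 = sqrt (P 0 * P j)
  have hsq0 : P 0 * c 0 = Real.sqrt (P 0 * P j) := by
    rw [hc0, show P 0 * P j = P 0 ^ 2 * (P j / P 0) by
        field_simp [ne_of_gt (hPpos 0)],
      Real.sqrt_mul (by positivity), Real.sqrt_sq (hPpos 0).le]
  have hsqj : P j * c j = Real.sqrt (P 0 * P j) := by
    rw [hcj, show P 0 * P j = P j ^ 2 * (P 0 / P j) by
        field_simp [ne_of_gt (hPpos j)],
      Real.sqrt_mul (by positivity), Real.sqrt_sq (hPpos j).le]
  -- sum of r
  have h0mem : (0 : Fin (k + 2)) ∈ Finset.univ := Finset.mem_univ _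
  have hjmem : j ∈ Finset.univ := Finset.mem_univ _
  have hS : ∑ i, r i = 2 * Real.sqrt (P 0 * P j) + 1 - P 0 - P j := by
    have : ∑ i, r i = ∑ i, (P i * (c i - 1)) + ∑ i, P i := by
      rw [← Finset.sum_add_distrib]
      apply Finset.sum_congr rfl
      intro i _
      ring
    rw [this, hPsum]
    have h2 : ∑ i, (P i * (c i - 1)) = P 0 * (c 0 - 1) + P j * (c j - 1) := by
      apply Finset.sum_eq_add_of_mem 0 j h0mem hjmem (Ne.symm hj0)
      intro i _ h12
      rw [hcelse i h12.1 h12.2]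
      ring
    rw [h2]
    nlinarith [hsq0, hsqj]
  have hSpos : 0 < ∑ i, r i := Finset.sum_pos (fun i _ => hrpos i) ⟨0, h0mem⟩
  -- main decomposition
  have hdecomp : ∀ i, Q i * Real.log (Q i / P i)
      = Q i * Real.log (Q i / r i) + Q i * Real.log (c i) := by
    intro i
    rcases eq_or_lt_of_le (hQnn i) with h | h
    · rw [← h]; ring
    · rw [← mul_add, ← Real.log_mul (ne_of_gt (div_pos h (hrpos i))) (ne_of_gt (hcpos i))]
      congr 2
      rw [hrdef]
      dsimp only
      field_simp [ne_of_gt (hPpos i), ne_of_gt (hcpos i)]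
  have hclog : 0 ≤ ∑ i, Q i * Real.log (c i) := by
    have h2 : ∑ i, Q i * Real.log (c i) = Q 0 * Real.log (c 0) + Q j * Real.log (c j) := by
      apply Finset.sum_eq_add_of_mem 0 j h0mem hjmem (Ne.symm hj0)
      intro i _ h12
      rw [hcelse i h12.1 h12.2]
      simp
    have hc0j : Real.log (c 0) = -Real.log (c j) := by
      rw [hc0, hcj, ← Real.log_inv, ← Real.sqrt_inv, inv_div]
    have hlogj : 0 ≤ Real.log (c j) := by
      rw [hcj]
      exact Real.log_nonneg (Real.one_le_sqrt.mpr ((one_le_div (hPpos j)).mpr hPj0))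
    rw [h2, hc0j]
    nlinarith
  have hcore := kl_core (k + 2) Q r hQnn hQsum hrpos
  -- monotonicity step : S ≤ T
  have hST : ∑ i, r i ≤ 2 * Real.sqrt (P 0 * P 1) + 1 - P 0 - P 1 := by
    rw [hS]
    have ha := Real.sqrt_nonneg (P j)
    have hb := Real.sqrt_nonneg (P 1)
    have hab : Real.sqrt (P j) ≤ Real.sqrt (P 1) := Real.sqrt_le_sqrt hPj1
    have hbc : Real.sqrt (P 1) ≤ Real.sqrt (P 0) := Real.sqrt_le_sqrt hP10
    have e1 : Real.sqrt (P 0 * P j) = Real.sqrt (P 0) * Real.sqrt (P j) :=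
      Real.sqrt_mul (hPpos 0).le _
    have e2 : Real.sqrt (P 0 * P 1) = Real.sqrt (P 0) * Real.sqrt (P 1) :=
      Real.sqrt_mul (hPpos 0).le _
    have s1 : Real.sqrt (P j) ^ 2 = P j := Real.sq_sqrt (hPpos j).le
    have s2 : Real.sqrt (P 1) ^ 2 = P 1 := Real.sq_sqrt (hPpos 1).le
    rw [e1, e2]
    nlinarith [mul_nonneg (sub_nonneg.mpr hab) (sub_nonneg.mpr hbc),
      mul_nonneg (sub_nonneg.mpr hab) (sub_nonneg.mpr (le_trans hab hbc))]
  have hlogmono : Real.log (∑ i, r i)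
      ≤ Real.log (2 * Real.sqrt (P 0 * P 1) + 1 - P 0 - P 1) :=
    Real.log_le_log hSpos hST
  calc -Real.log (2 * Real.sqrt (P 0 * P 1) + 1 - P 0 - P 1)
      ≤ -Real.log (∑ i, r i) := by linarith
    _ ≤ ∑ i, Q i * Real.log (Q i / r i) := hcore
    _ ≤ ∑ i, Q i * Real.log (Q i / r i) + ∑ i, Q i * Real.log (c i) := by linarith
    _ = ∑ i, Q i * Real.log (Q i / P i) := by
        rw [← Finset.sum_add_distrib]
        exact Finset.sum_congr rfl (fun i _ => (hdecomp i).symm)
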